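/- (Explicit form of self-similar collapsing trajectories) Let α > 0, let N ≥ 2, let a_1, …, a_N be nonzero reals, and let (x_1, …, x_N) be a solution of the α-point-vortex system on [0,T) which is a self-similar collapse at time T, with scaling factor f and rotation angle θ. Then f(t) = ((T − t)/T)^{1/(α+1)} for all t ∈ [0,T), and there exists D ∈ ℝ such that, identifying ℝ² with ℂ, x_j(t) = x_j(0) · ((T − t)/T)^{1/(α+1)} · exp( −i D T ln((T − t)/T) ) for every j ∈ {1, …, N} and every t ∈ [0,T). -/

import Mathlib

open Set

lemma const_on_Ico {E : Type*} [NormedAddCommGroup E] [NormedSpace ℝ E] {g : ℝ → E} {T : ℝ}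
    (h : ∀ t ∈ Set.Ico (0:ℝ) T, HasDerivWithinAt g 0 (Set.Ico 0 T) t)
    {t : ℝ} (ht : t ∈ Set.Ico (0:ℝ) T) : g t = g 0 := by
  have h0 : (0:ℝ) ∈ Set.Ico (0:ℝ) T := ⟨le_refl _, lt_of_le_of_lt ht.1 ht.2⟩
  refine (convex_Ico (0:ℝ) T).is_const_of_fderivWithin_eq_zero (𝕜 := ℝ)
    (fun s hs => (h s hs).differentiableWithinAt) (fun s hs => ?_) ht h0
  have := (hasDerivWithinAt_iff_hasFDerivWithinAt.1 (h s hs)).fderivWithin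
    ((uniqueDiffOn_Ico 0 T) s hs)
  rw [this]
  ext
  simp

lemma hasDerivWithinAt_normSq {z : ℝ → ℂ} {z' : ℂ} {s : Set ℝ} {t : ℝ}
    (h : HasDerivWithinAt z z' s t) :
    HasDerivWithinAt (fun t => Complex.normSq (z t)) (2 * (z' * (starRingEnd ℂ) (z t)).re) s t := by
  have hre : HasDerivWithinAt (fun t => (z t).re) z'.re s t :=
    Complex.reCLM.hasFDerivAt.comp_hasDerivWithinAt t h
  have him : HasDerivWithinAt (fun t => (z t).im) z'.im s t :=
    Complex.imCLM.hasFDerivAt.comp_hasDerivWithinAt t h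
  have h2 := (hre.mul hre).add (him.mul him)
  have he : (fun t => Complex.normSq (z t)) = fun t => (z t).re * (z t).re + (z t).im * (z t).im := by
    funext s; simp [Complex.normSq_apply]
  rw [he]
  refine h2.congr_deriv ?_
  rw [Complex.mul_re, Complex.conj_re, Complex.conj_im]
  ring

/-- **Explicit form of self-similar collapsing trajectories.**
Identifying `ℝ²` with `ℂ` (so `v^⊥ = I * v`), let `α > 0`, `N ≥ 2`, let `a i` be nonzero
intensities, and let `(x₁,…,x_N)` be a solution of the `α`-point-vortex system on `[0,T)` that
is a self-similar collapse at time `T` with scaling factor `f` and rotation angle `θ`. Then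
`f t = ((T − t)/T)^{1/(α+1)}` on `[0,T)` and there exists `D ∈ ℝ` such that
`x j t = x j 0 · ((T − t)/T)^{1/(α+1)} · exp(−i D T ln((T − t)/T))` for all `j` and
`t ∈ [0,T)`. -/
theorem self_similar_collapse_explicit_form (N : ℕ) (hN : 2 ≤ N)
    (α : ℝ) (hα : 0 < α)
    (a : Fin N → ℝ) (ha : ∀ i, a i ≠ 0) (T : ℝ) (hT : 0 < T)
    (x : Fin N → ℝ → ℂ)
    (hsep : ∀ i j, i ≠ j → ∀ t ∈ Set.Ico (0:ℝ) T, x i t ≠ x j t)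
    (hode : ∀ i, ∀ t ∈ Set.Ico (0:ℝ) T,
      HasDerivWithinAt (x i)
        (∑ j ∈ Finset.univ.filter (fun j => j ≠ i),
          (a j / ‖x i t - x j t‖ ^ (α + 1)) • (Complex.I * (x i t - x j t)))
        (Set.Ico (0:ℝ) T) t)
    (f θ : ℝ → ℝ)
    (hfcont : ContinuousOn f (Set.Icc 0 T)) (hθcont : ContinuousOn θ (Set.Ico 0 T))
    (hfnn : ∀ t ∈ Set.Icc (0:ℝ) T, 0 ≤ f t)
    (hf0 : f 0 = 1) (hfT : f T = 0)
    (hfpos : ∀ t ∈ Set.Ico (0:ℝ) T, 0 < f t)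
    (hθ0 : θ 0 = 0)
    (hss : ∀ j, ∀ t ∈ Set.Ico (0:ℝ) T,
      x j t = (f t : ℂ) * Complex.exp (Complex.I * (θ t : ℂ)) * x j 0) :
    (∀ t ∈ Set.Ico (0:ℝ) T, f t = ((T - t) / T) ^ (1 / (α + 1))) ∧
    ∃ D : ℝ, ∀ j, ∀ t ∈ Set.Ico (0:ℝ) T,
      x j t = x j 0 * ((((T - t) / T) ^ (1 / (α + 1)) : ℝ) : ℂ) *
        Complex.exp (-Complex.I * (D : ℂ) * (T : ℂ) * ((Real.log ((T - t) / T) : ℝ) : ℂ)) := by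
  have hα1 : α + 1 ≠ 0 := by positivity
  have h0mem : (0:ℝ) ∈ Set.Ico (0:ℝ) T := ⟨le_refl _, hT⟩
  have hIco : ∀ t ∈ Set.Ico (0:ℝ) T, 0 < (T - t)/T := fun t ht => div_pos (by linarith [ht.2]) hT
  -- choose i₀ with x i₀ 0 ≠ 0
  obtain ⟨i₀, hx0⟩ : ∃ i, x i 0 ≠ 0 := by
    by_contra h
    push_neg at h
    have h01 : (⟨0, by omega⟩ : Fin N) ≠ ⟨1, by omega⟩ := by simp [Fin.ext_iff]
    exact hsep _ _ h01 0 h0mem (by rw [h, h])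
  set z : ℝ → ℂ := fun t => x i₀ t / x i₀ 0 with hzdef
  have hzζ : ∀ t ∈ Set.Ico (0:ℝ) T,
      z t = (f t : ℂ) * Complex.exp (Complex.I * (θ t : ℂ)) := by
    intro t ht
    rw [hzdef]
    simp only
    rw [hss i₀ t ht]
    field_simp
  have hz0 : z 0 = 1 := by rw [hzdef]; simp only; rw [div_self hx0]
  have habs : ∀ t ∈ Set.Ico (0:ℝ) T, ‖z t‖ = f t := by
    intro t ht
    rw [hzζ t ht, norm_mul, Complex.norm_real, Real.norm_eq_abs, Complex.norm_exp,
      abs_of_nonneg (hfpos t ht).le]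
    simp
  have hq2 : ∀ t ∈ Set.Ico (0:ℝ) T, Complex.normSq (z t) = f t ^ 2 := by
    intro t ht
    rw [Complex.normSq_eq_norm_sq, habs t ht]
  set S : ℂ := ∑ j ∈ Finset.univ.filter (fun j => j ≠ i₀),
      ((a j / ‖x i₀ 0 - x j 0‖ ^ (α + 1)) • (Complex.I * (x i₀ 0 - x j 0))) with hSdef
  set c : ℂ := S / x i₀ 0 with hcdef
  have hftpos : ∀ t ∈ Set.Ico (0:ℝ) T, 0 < f t ^ (α+1) :=
    fun t ht => Real.rpow_pos_of_pos (hfpos t ht) _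
  -- the ODE for z
  have hderiv : ∀ t ∈ Set.Ico (0:ℝ) T,
      HasDerivWithinAt z ((((f t ^ (α+1) : ℝ) : ℂ))⁻¹ * c * z t) (Set.Ico 0 T) t := by
    intro t ht
    have h1 := (hode i₀ t ht).div_const (x i₀ 0)
    have hsum : (∑ j ∈ Finset.univ.filter (fun j => j ≠ i₀),
        (a j / ‖x i₀ t - x j t‖ ^ (α + 1)) • (Complex.I * (x i₀ t - x j t)))
        = (z t / ((f t ^ (α+1) : ℝ) : ℂ)) * S := by
      rw [hSdef, Finset.mul_sum]
      refine Finset.sum_congr rfl ?_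
      intro j hj
      have hji : j ≠ i₀ := by simpa using hj
      have hd0 : x i₀ 0 - x j 0 ≠ 0 := sub_ne_zero.mpr (hsep i₀ j (Ne.symm hji) 0 h0mem)
      have hdt : x i₀ t - x j t = z t * (x i₀ 0 - x j 0) := by
        rw [hss i₀ t ht, hss j t ht, hzζ t ht]; ring
      have hzabs : ‖z t‖ = f t := habs t ht
      have hnorm : ‖x i₀ t - x j t‖ ^ (α+1) = f t ^ (α+1) * ‖x i₀ 0 - x j 0‖ ^ (α+1) := by
        rw [hdt, norm_mul, hzabs, ← Real.mul_rpow (hfpos t ht).le (norm_nonneg _)]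
      have hn0 : ‖x i₀ 0 - x j 0‖ ^ (α+1) ≠ 0 :=
        (Real.rpow_pos_of_pos (norm_pos_iff.mpr hd0) _).ne'
      rw [hnorm, Complex.real_smul, Complex.real_smul, hdt]
      have hftne : (f t ^ (α+1) : ℝ) ≠ 0 := (hftpos t ht).ne'
      push_cast
      field_simp
    rw [hsum] at h1
    have : z t / ((f t ^ (α+1) : ℝ) : ℂ) * S / x i₀ 0 = (((f t ^ (α+1) : ℝ) : ℂ))⁻¹ * c * z t := by
      rw [hcdef]; ring
    rw [this] at h1
    exact h1
  set A := c.re with hA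
  -- derivative of normSq z
  have hq : ∀ t ∈ Set.Ico (0:ℝ) T,
      HasDerivWithinAt (fun s => Complex.normSq (z s))
        (2 * A * f t ^ 2 / f t ^ (α+1)) (Set.Ico 0 T) t := by
    intro t ht
    have h2 := hasDerivWithinAt_normSq (hderiv t ht)
    convert h2 using 1
    have e1 : (((f t ^ (α+1) : ℝ) : ℂ))⁻¹ * c * z t * (starRingEnd ℂ) (z t)
        = (((f t ^ (α+1) : ℝ) : ℂ))⁻¹ * c * ((Complex.normSq (z t) : ℝ) : ℂ) := by
      rw [mul_assoc, Complex.mul_conj]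
    rw [e1, hq2 t ht]
    simp only [Complex.mul_re, Complex.mul_im, Complex.ofReal_re, Complex.ofReal_im,
      Complex.inv_re, Complex.inv_im, Complex.normSq_ofReal]
    rw [hA]
    have hftne : (f t ^ (α+1) : ℝ) ≠ 0 := (hftpos t ht).ne'
    field_simp
    ring
  -- derivative of u = normSq z ^ ((α+1)/2)
  have hu : ∀ t ∈ Set.Ico (0:ℝ) T,
      HasDerivWithinAt (fun s => Complex.normSq (z s) ^ ((α+1)/2))
        ((α+1) * A) (Set.Ico 0 T) t := by
    intro t ht
    have hfp := hfpos t ht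
    have hqne : Complex.normSq (z t) ≠ 0 := by rw [hq2 t ht]; positivity
    have h3 := (hq t ht).rpow_const (p := (α+1)/2) (Or.inl hqne)
    convert h3 using 1
    rw [hq2 t ht]
    obtain ⟨s, hs⟩ : ∃ s, f t = Real.exp s := ⟨Real.log (f t), (Real.exp_log hfp).symm⟩
    rw [hs, ← Real.exp_nat_mul, ← Real.exp_mul, ← Real.exp_mul]
    have he : Real.exp ((2:ℕ)*s) * Real.exp ((2:ℕ)*s*((α+1)/2-1)) = Real.exp (s*(α+1)) := by
      rw [← Real.exp_add]; congr 1; push_cast; ring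
    rw [div_mul_eq_mul_div, div_mul_eq_mul_div, eq_div_iff (Real.exp_ne_zero _)]
    linear_combination (-(A*(α+1))) * he
  -- u t = f t ^ (α+1)
  have huf : ∀ t ∈ Set.Ico (0:ℝ) T,
      Complex.normSq (z t) ^ ((α+1)/2) = f t ^ (α+1) := by
    intro t ht
    have hfp := hfpos t ht
    rw [hq2 t ht]
    obtain ⟨s, hs⟩ : ∃ s, f t = Real.exp s := ⟨Real.log (f t), (Real.exp_log hfp).symm⟩
    rw [hs, ← Real.exp_nat_mul, ← Real.exp_mul, ← Real.exp_mul]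
    congr 1
    push_cast
    ring
  -- u is affine
  have hulin : ∀ t ∈ Set.Ico (0:ℝ) T, f t ^ (α+1) = 1 + (α+1) * A * t := by
    intro t ht
    have hder : ∀ s ∈ Set.Ico (0:ℝ) T,
        HasDerivWithinAt (fun r => Complex.normSq (z r) ^ ((α+1)/2) - (α+1) * A * r)
          0 (Set.Ico 0 T) s := by
      intro s hs
      have h4 := (hu s hs).sub
        (((hasDerivWithinAt_id s (Set.Ico (0:ℝ) T)).const_mul ((α+1) * A)))
      refine h4.congr_deriv ?_
      ring
    have h5 := const_on_Ico hder ht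
    simp only [hz0, mul_zero, sub_zero] at h5
    have hz01 : Complex.normSq (1:ℂ) ^ ((α+1)/2) = 1 := by simp
    rw [hz01] at h5
    rw [← huf t ht]
    linarith [h5]
  -- determine A from f T = 0
  have hAval : 1 + (α+1) * A * T = 0 := by
    have hcontu : ContinuousOn (fun t => f t ^ (α+1)) (Set.Icc 0 T) :=
      hfcont.rpow_const (fun s hs => Or.inr (by positivity))
    have hTmem : T ∈ Set.Icc (0:ℝ) T := ⟨hT.le, le_refl T⟩
    have h1 : Filter.Tendsto (fun t => f t ^ (α+1)) (nhdsWithin T (Set.Ico 0 T)) (nhds 0) := by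
      have h := hcontu T hTmem
      rw [ContinuousWithinAt, hfT, Real.zero_rpow hα1] at h
      exact h.mono_left (nhdsWithin_mono _ Set.Ico_subset_Icc_self)
    have h2 : Filter.Tendsto (fun t => 1 + (α+1) * A * t) (nhdsWithin T (Set.Ico 0 T))
        (nhds (1 + (α+1) * A * T)) :=
      ((continuous_const.add (continuous_const.mul continuous_id)).tendsto T).mono_left
        nhdsWithin_le_nhds
    have h3 : Filter.Tendsto (fun t => f t ^ (α+1)) (nhdsWithin T (Set.Ico 0 T))
        (nhds (1 + (α+1) * A * T)) := by
      refine h2.congr' ?_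
      filter_upwards [self_mem_nhdsWithin] with s hs
      exact (hulin s hs).symm
    haveI : (nhdsWithin T (Set.Ico (0:ℝ) T)).NeBot :=
      (right_nhdsWithin_Ioo_neBot hT).mono (nhdsWithin_mono _ Set.Ioo_subset_Ico_self)
    exact (tendsto_nhds_unique h3 h1)
  have hA' : (α+1) * A = -1/T := by
    field_simp
    linarith
  have hftp : ∀ t ∈ Set.Ico (0:ℝ) T, f t ^ (α+1) = (T - t)/T := by
    intro t ht
    rw [hulin t ht, hA']
    field_simp
    ring
  -- Part 1
  have part1 : ∀ t ∈ Set.Ico (0:ℝ) T, f t = ((T - t) / T) ^ (1 / (α + 1)) := by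
    intro t ht
    rw [← hftp t ht, one_div, Real.rpow_rpow_inv (hfpos t ht).le hα1]
  refine ⟨part1, c.im, ?_⟩
  -- derivative of the log factor
  have hL : ∀ t ∈ Set.Ico (0:ℝ) T,
      HasDerivWithinAt (fun s => Real.log ((T - s)/T)) ((-1/T)/((T-t)/T)) (Set.Ico 0 T) t := by
    intro t ht
    have hb : HasDerivWithinAt (fun s => (T - s)/T) (-1/T) (Set.Ico 0 T) t := by
      have h0 := ((hasDerivWithinAt_id t (Set.Ico (0:ℝ) T)).const_sub T).div_const T
      simpa using h0
    exact hb.log (hIco t ht).ne'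
  -- derivative of M s = c * (-T * log ((T-s)/T))
  have hMder : ∀ t ∈ Set.Ico (0:ℝ) T,
      HasDerivWithinAt (fun s => c * ((-T * Real.log ((T - s)/T) : ℝ) : ℂ))
        (c * ((T/(T-t) : ℝ) : ℂ)) (Set.Ico 0 T) t := by
    intro t ht
    have hTt : (0:ℝ) < T - t := sub_pos.mpr ht.2
    have h1 := (hL t ht).const_mul (-T)
    have h2 : HasDerivWithinAt (fun s => ((-T * Real.log ((T - s)/T) : ℝ) : ℂ))
        (((-T * ((-1/T)/((T-t)/T)) : ℝ) : ℂ)) (Set.Ico 0 T) t :=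
      Complex.ofRealCLM.hasFDerivAt.comp_hasDerivWithinAt t h1
    have h3 := h2.const_mul c
    convert h3 using 2
    norm_cast
    field_simp
  -- z t = exp (M t)
  have hzexp : ∀ t ∈ Set.Ico (0:ℝ) T,
      z t = Complex.exp (c * ((-T * Real.log ((T - t)/T) : ℝ) : ℂ)) := by
    have hg : ∀ t ∈ Set.Ico (0:ℝ) T,
        HasDerivWithinAt
          (fun s => z s * Complex.exp (-(c * ((-T * Real.log ((T - s)/T) : ℝ) : ℂ))))
          0 (Set.Ico 0 T) t := by
      intro t ht
      have hTt : (0:ℝ) < T - t := sub_pos.mpr ht.2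
      have hexp := ((hMder t ht).neg).cexp
      have h4 := (hderiv t ht).mul hexp
      refine HasDerivWithinAt.congr_deriv h4 ?_
      rw [hftp t ht, ← Complex.ofReal_inv, inv_div]
      ring
    intro t ht
    have h5 := const_on_Ico hg ht
    have hM0 : ((-T * Real.log ((T - (0:ℝ))/T) : ℝ) : ℂ) = 0 := by
      rw [sub_zero, div_self hT.ne', Real.log_one, mul_zero, Complex.ofReal_zero]
    rw [hz0, hM0, mul_zero, neg_zero, Complex.exp_zero, one_mul, Complex.exp_neg] at h5
    exact (mul_inv_eq_one₀ (Complex.exp_ne_zero _)).mp h5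
  intro j t ht
  have hTt := hIco t ht
  have hAc : A = -(1/((α+1)*T)) := by
    field_simp
    linarith [hAval]
  have hα0 : ((α:ℝ):ℂ) + 1 ≠ 0 := by exact_mod_cast hα1
  have hT0 : ((T:ℝ):ℂ) ≠ 0 := Complex.ofReal_ne_zero.mpr hT.ne'
  have hsplit : c * ((-T * Real.log ((T - t)/T) : ℝ) : ℂ)
      = ((1/(α+1) * Real.log ((T-t)/T) : ℝ) : ℂ)
        + (-Complex.I * ((c.im : ℝ) : ℂ) * ((T:ℝ) : ℂ) * ((Real.log ((T-t)/T) : ℝ) : ℂ)) := by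
    obtain ⟨B, hB⟩ : ∃ B, c.im = B := ⟨_, rfl⟩
    have hc2 : c = ((A : ℝ) : ℂ) + ((B : ℝ) : ℂ) * Complex.I := by
      rw [hA, ← hB]; exact (Complex.re_add_im c).symm
    rw [hB]
    have hAC : ((A : ℝ) : ℂ) * (-((T:ℝ):ℂ)) = 1/(((α:ℝ):ℂ)+1) := by
      rw [hAc]
      push_cast
      field_simp
    rw [hc2]
    push_cast
    linear_combination ((Real.log ((T-t)/T) : ℝ) : ℂ) * hAC
  have hre : Real.exp (1/(α+1) * Real.log ((T-t)/T)) = ((T-t)/T) ^ (1/(α+1)) := by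
    rw [Real.rpow_def_of_pos hTt, mul_comm]
  rw [hss j t ht, ← hzζ t ht, hzexp t ht, hsplit, Complex.exp_add, ← Complex.ofReal_exp, hre]
  ring
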